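/- For positive reals α, β and integer n ≥ 1, the Beta-Shapley weights w(j) = n·Beta(j+β-1, n-j+α)/Beta(α,β) satisfy ∑_{j=1}^{n} C(n-1, j-1)·w(j) = n. -/

import Mathlib

open Finset

noncomputable def Beta (x y : ℝ) : ℝ := Real.Gamma x * Real.Gamma y / Real.Gamma (x + y)

lemma Beta_comm (x y : ℝ) : Beta x y = Beta y x := by
  unfold Beta; rw [mul_comm, add_comm]

lemma Beta_rec (x y : ℝ) (hx : 0 < x) (hy : 0 < y) :
    Beta (x + 1) y + Beta x (y + 1) = Beta x y := by
  unfold Beta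
  have h1 : Real.Gamma (x + 1) = x * Real.Gamma x := Real.Gamma_add_one hx.ne'
  have h2 : Real.Gamma (y + 1) = y * Real.Gamma y := Real.Gamma_add_one hy.ne'
  have h3 : x + 1 + y = (x + y) + 1 := by ring
  have h4 : x + (y + 1) = (x + y) + 1 := by ring
  have h5 : Real.Gamma ((x + y) + 1) = (x + y) * Real.Gamma (x + y) :=
    Real.Gamma_add_one (by positivity)
  have hxy : Real.Gamma (x + y) ≠ 0 := (Real.Gamma_pos_of_pos (by positivity)).ne'
  rw [h1, h2, h3, h4, h5]
  field_simp

lemma Beta_key (α β : ℝ) (hα : 0 < α) (hβ : 0 < β) (m : ℕ) :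
    ∑ k ∈ Finset.range (m + 1),
      (m.choose k : ℝ) * Beta ((k : ℝ) + β) ((m : ℝ) - (k : ℝ) + α) = Beta α β := by
  induction m with
  | zero => simp [Beta_comm β α]
  | succ m ih =>
    set f : ℕ → ℝ := fun k => Beta ((k : ℝ) + β) (((m : ℝ) + 1) - (k : ℝ) + α) with hf
    have hsum : ∑ k ∈ Finset.range (m + 1 + 1),
        ((m + 1).choose k : ℝ) * Beta ((k : ℝ) + β) (((m : ℕ) + 1 : ℝ) - (k : ℝ) + α)
        = ∑ k ∈ Finset.range (m + 1), ((m + 1).choose (k + 1) : ℝ) * f (k + 1) + f 0 := by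
      rw [Finset.sum_range_succ']
      simp [hf]
    rw [show ((m : ℕ) + 1 : ℕ) = m + 1 from rfl] at *
    push_cast
    rw [hsum]
    have hsplit : ∀ k ∈ Finset.range (m + 1),
        ((m + 1).choose (k + 1) : ℝ) * f (k + 1)
        = (m.choose k : ℝ) * f (k + 1) + (m.choose (k + 1) : ℝ) * f (k + 1) := by
      intro k _
      rw [Nat.choose_succ_succ]
      push_cast
      ring
    rw [Finset.sum_congr rfl hsplit, Finset.sum_add_distrib]
    have h2 : ∑ k ∈ Finset.range (m + 1), (m.choose (k + 1) : ℝ) * f (k + 1)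
        = ∑ k ∈ Finset.range (m + 1), (m.choose k : ℝ) * f k - f 0 := by
      have := Finset.sum_range_succ' (fun k => (m.choose k : ℝ) * f k) (m + 1)
      have h3 : ∑ k ∈ Finset.range (m + 1 + 1), (m.choose k : ℝ) * f k
          = ∑ k ∈ Finset.range (m + 1), (m.choose k : ℝ) * f k := by
        rw [Finset.sum_range_succ, Nat.choose_succ_self]
        simp
      rw [h3] at this
      simp only [Nat.choose_zero_right, Nat.cast_one, one_mul] at this
      linarith
    rw [h2]
    have hmerge : ∑ k ∈ Finset.range (m + 1), (m.choose k : ℝ) * f (k + 1)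
        + (∑ k ∈ Finset.range (m + 1), (m.choose k : ℝ) * f k - f 0) + f 0
        = ∑ k ∈ Finset.range (m + 1), (m.choose k : ℝ) * (f (k + 1) + f k) := by
      simp only [mul_add, Finset.sum_add_distrib]
      ring
    rw [hmerge]
    rw [← ih]
    apply Finset.sum_congr rfl
    intro k hk
    congr 1
    have hk' : (k : ℝ) + β > 0 := by positivity
    have hk2 : (m : ℝ) - (k : ℝ) + α > 0 := by
      have : (k : ℝ) ≤ m := by
        exact_mod_cast Nat.lt_succ_iff.mp (Finset.mem_range.mp hk)
      linarith
    have := Beta_rec ((k : ℝ) + β) ((m : ℝ) - (k : ℝ) + α) hk' hk2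
    rw [← this, hf]
    push_cast
    ring_nf

theorem beta_shapley_weight_sum
    (α β : ℝ) (hα : 0 < α) (hβ : 0 < β) (n : ℕ) (hn : 1 ≤ n) :
    ∑ j ∈ Finset.Icc 1 n,
      ((n - 1).choose (j - 1) : ℝ) *
        ((n : ℝ) * Beta ((j : ℝ) + β - 1) ((n : ℝ) - (j : ℝ) + α) / Beta α β) = n := by
  have hB : Beta α β ≠ 0 := by
    unfold Beta
    have h1 := Real.Gamma_pos_of_pos hα
    have h2 := Real.Gamma_pos_of_pos hβ
    have h3 := Real.Gamma_pos_of_pos (show (0:ℝ) < α + β by positivity)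
    positivity
  rw [show Finset.Icc 1 n = Finset.Ico 1 (n+1) by rw [Finset.Ico_add_one_right_eq_Icc],
    Finset.sum_Ico_eq_sum_range]
  have hkey := Beta_key α β hα hβ (n - 1)
  have hcast : ((n - 1 : ℕ) : ℝ) = (n : ℝ) - 1 := by
    rw [Nat.cast_sub hn]; simp
  rw [hcast] at hkey
  have heq : ∀ i ∈ Finset.range (n + 1 - 1),
      ((n - 1).choose (1 + i - 1) : ℝ) *
        ((n : ℝ) * Beta (((1 + i : ℕ) : ℝ) + β - 1) ((n : ℝ) - ((1 + i : ℕ) : ℝ) + α) / Beta α β)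
      = ((n - 1).choose i : ℝ) * Beta ((i : ℝ) + β) (((n : ℝ) - 1) - (i : ℝ) + α)
          * ((n : ℝ) / Beta α β) := by
    intro i _
    have : (1 + i - 1 : ℕ) = i := by omega
    rw [this]
    push_cast
    ring_nf
  rw [Finset.sum_congr rfl heq, ← Finset.sum_mul]
  rw [show n + 1 - 1 = (n - 1) + 1 by omega]
  rw [hkey]
  field_simp
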